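/- Let P(z) = z^3 + a z^2 + b z + c be a cubic polynomial with complex coefficients such that 0 < 1 - |c|^2 ≤ |a·conj(c) - conj(b)|. Then P has a root r with |r| ≥ 1. -/

import Mathlib

open Complex

lemma quad_root_aux (B C : ℂ) : ∃ z : ℂ, z ^ 2 + B * z + C = 0 := by
  obtain ⟨s, hs⟩ := IsAlgClosed.exists_pow_nat_eq (k := ℂ) (B ^ 2 - 4 * C) two_pos
  exact ⟨(-B + s) / 2, by linear_combination hs / 4⟩

lemma cubic_root_aux (a b c : ℂ) : ∃ z : ℂ, z ^ 3 + a * z ^ 2 + b * z + c = 0 := by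
  classical
  set p : Polynomial ℂ := Polynomial.X ^ 3 + Polynomial.C a * Polynomial.X ^ 2 +
    Polynomial.C b * Polynomial.X + Polynomial.C c with hp
  have hdeg : p.degree = 3 := by
    rw [hp]
    compute_degree!
  obtain ⟨z, hz⟩ := Complex.exists_root (f := p) (by rw [hdeg]; norm_num)
  refine ⟨z, ?_⟩
  have := hz
  simp only [hp, Polynomial.IsRoot, Polynomial.eval_add, Polynomial.eval_mul,
    Polynomial.eval_pow, Polynomial.eval_X, Polynomial.eval_C] at this
  linear_combination this

lemma key_ineq_aux (r w : ℂ) (hr : ‖r‖ < 1) (hw : 1 ≤ ‖w‖) :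
    ‖1 - (starRingEnd ℂ) r * w‖ ≤ ‖w - r‖ := by
  have hid : Complex.normSq (w - r) - Complex.normSq (1 - (starRingEnd ℂ) r * w)
      = (Complex.normSq w - 1) * (1 - Complex.normSq r) := by
    simp only [Complex.normSq_apply, Complex.mul_re, Complex.mul_im, Complex.sub_re,
      Complex.sub_im, Complex.one_re, Complex.one_im, Complex.conj_re, Complex.conj_im]
    ring
  have h1 : Complex.normSq r < 1 := by
    have := Complex.sq_norm r
    nlinarith [norm_nonneg r]
  have h2 : 1 ≤ Complex.normSq w := by
    have := Complex.sq_norm w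
    nlinarith
  have hsq : ‖1 - (starRingEnd ℂ) r * w‖ ^ 2 ≤ ‖w - r‖ ^ 2 := by
    rw [Complex.sq_norm, Complex.sq_norm]
    nlinarith
  exact (pow_le_pow_iff_left₀ (norm_nonneg _) (norm_nonneg _) two_ne_zero).mp hsq

/-- Lemma `lem:polyunstable`: if `P(z) = z^3 + a z^2 + b z + c` satisfies
`0 < 1 - |c|^2 ≤ |a * conj c - conj b|`, then `P` has a root `r` with `|r| ≥ 1`. -/
theorem cubic_has_root_outside_disk (a b c : ℂ)
    (h₁ : 0 < 1 - ‖c‖ ^ 2)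
    (h₂ : 1 - ‖c‖ ^ 2 ≤ ‖a * (starRingEnd ℂ) c - (starRingEnd ℂ) b‖) :
    ∃ r : ℂ, r ^ 3 + a * r ^ 2 + b * r + c = 0 ∧ 1 ≤ ‖r‖ := by
  by_contra hcon
  push_neg at hcon
  obtain ⟨r1, hr1⟩ := cubic_root_aux a b c
  obtain ⟨r2, hr2⟩ := quad_root_aux (a + r1) (r1 ^ 2 + a * r1 + b)
  obtain ⟨r3, hr3def⟩ : ∃ r3 : ℂ, r3 = -(a + r1) - r2 := ⟨_, rfl⟩
  -- Vieta
  have ha : a = -(r1 + r2 + r3) := by rw [hr3def]; ring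
  have hb : b = r1 * r2 + r1 * r3 + r2 * r3 := by rw [hr3def]; linear_combination hr2
  have hc : c = -(r1 * r2 * r3) := by
    rw [hr3def]; linear_combination hr1 - r1 * hr2
  -- r2, r3 are roots of the cubic too
  have hroot2 : r2 ^ 3 + a * r2 ^ 2 + b * r2 + c = 0 := by
    linear_combination (r2 - r1) * hr2 + hr1
  have hroot3 : r3 ^ 3 + a * r3 ^ 2 + b * r3 + c = 0 := by
    rw [ha, hb, hc]; ring
  have habs1 : ‖r1‖ < 1 := hcon r1 hr1
  have habs2 : ‖r2‖ < 1 := hcon r2 hroot2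
  have habs3 : ‖r3‖ < 1 := hcon r3 hroot3
  -- the quadratic q(z) = A z^2 + (a - c conj b) z + (b - c conj a), A = 1 - |c|^2 > 0
  obtain ⟨A, hA⟩ : ∃ A : ℝ, A = 1 - ‖c‖ ^ 2 := ⟨_, rfl⟩
  have hApos : 0 < A := by rw [hA]; exact h₁
  have hA0 : (A : ℂ) ≠ 0 := by exact_mod_cast ne_of_gt hApos
  obtain ⟨w1, hw1⟩ := quad_root_aux ((a - c * (starRingEnd ℂ) b) / A)
    ((b - c * (starRingEnd ℂ) a) / A)
  obtain ⟨w2, hw2def⟩ : ∃ w2 : ℂ, w2 = -((a - c * (starRingEnd ℂ) b) / A) - w1 := ⟨_, rfl⟩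
  have hw2 : w2 ^ 2 + ((a - c * (starRingEnd ℂ) b) / A) * w2
      + ((b - c * (starRingEnd ℂ) a) / A) = 0 := by
    rw [hw2def]; linear_combination hw1
  have hprod : w1 * w2 = (b - c * (starRingEnd ℂ) a) / A := by
    rw [hw2def]; linear_combination -hw1
  -- one of w1, w2 has abs ≥ 1
  have hprodabs : 1 ≤ ‖w1‖ * ‖w2‖ := by
    rw [← norm_mul, hprod, norm_div]
    have hac : ‖b - c * (starRingEnd ℂ) a‖
        = ‖a * (starRingEnd ℂ) c - (starRingEnd ℂ) b‖ := by
      rw [← Complex.norm_conj (b - c * (starRingEnd ℂ) a)]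
      simp only [map_sub, map_mul, Complex.conj_conj]
      rw [← norm_neg]
      ring_nf
    rw [hac, Complex.norm_real, Real.norm_eq_abs, abs_of_pos hApos, le_div_iff₀ hApos, one_mul, hA]
    exact h₂
  have hwex : ∃ w : ℂ, (w ^ 2 + ((a - c * (starRingEnd ℂ) b) / A) * w
      + ((b - c * (starRingEnd ℂ) a) / A) = 0) ∧ 1 ≤ ‖w‖ := by
    by_cases h : 1 ≤ ‖w1‖
    · exact ⟨w1, hw1, h⟩
    · refine ⟨w2, hw2, ?_⟩
      push_neg at h
      by_contra h'
      push_neg at h'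
      nlinarith [norm_nonneg w1, norm_nonneg w2]
  obtain ⟨w, hw, hwabs⟩ := hwex
  -- clear denominators
  have hQ : ((A : ℂ)) * w ^ 2 + (a - c * (starRingEnd ℂ) b) * w
      + (b - c * (starRingEnd ℂ) a) = 0 := by
    field_simp at hw
    linear_combination hw
  have hAc : (A : ℂ) = 1 - c * (starRingEnd ℂ) c := by
    rw [hA, Complex.mul_conj, ← Complex.sq_norm]
    push_cast
    ring
  rw [hAc] at hQ
  -- key identity
  have hkey : (w - r1) * (w - r2) * (w - r3)
      = c * ((1 - (starRingEnd ℂ) r1 * w) * (1 - (starRingEnd ℂ) r2 * w)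
        * (1 - (starRingEnd ℂ) r3 * w)) := by
    have hca : (starRingEnd ℂ) a = -((starRingEnd ℂ) r1 + (starRingEnd ℂ) r2
        + (starRingEnd ℂ) r3) := by rw [ha]; simp
    have hcb : (starRingEnd ℂ) b = (starRingEnd ℂ) r1 * (starRingEnd ℂ) r2
        + (starRingEnd ℂ) r1 * (starRingEnd ℂ) r3 + (starRingEnd ℂ) r2 * (starRingEnd ℂ) r3 := by
      rw [hb]; simp
    have hcc : (starRingEnd ℂ) c
        = -((starRingEnd ℂ) r1 * (starRingEnd ℂ) r2 * (starRingEnd ℂ) r3) := by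
      rw [hc]; simp
    rw [hca, hcb, hcc, ha, hb, hc] at hQ
    rw [hc]
    linear_combination w * hQ
  -- magnitudes
  have hne : ∀ r : ℂ, ‖r‖ < 1 → w - r ≠ 0 := by
    intro r hr h
    have : w = r := sub_eq_zero.mp h
    rw [this] at hwabs
    linarith
  have hp1 : 0 < ‖w - r1‖ := norm_pos_iff.mpr (hne r1 habs1)
  have hp2 : 0 < ‖w - r2‖ := norm_pos_iff.mpr (hne r2 habs2)
  have hp3 : 0 < ‖w - r3‖ := norm_pos_iff.mpr (hne r3 habs3)
  have habsid := congrArg (‖·‖) hkey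
  simp only [norm_mul] at habsid
  have hk1 := key_ineq_aux r1 w habs1 hwabs
  have hk2 := key_ineq_aux r2 w habs2 hwabs
  have hk3 := key_ineq_aux r3 w habs3 hwabs
  have hcabs : ‖c‖ < 1 := by
    nlinarith [norm_nonneg c]
  have hm : ‖1 - (starRingEnd ℂ) r1 * w‖ * ‖1 - (starRingEnd ℂ) r2 * w‖
      * ‖1 - (starRingEnd ℂ) r3 * w‖
      ≤ ‖w - r1‖ * ‖w - r2‖ * ‖w - r3‖ := by
    have h12 := mul_le_mul hk1 hk2 (norm_nonneg _) (norm_nonneg _)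
    exact mul_le_mul h12 hk3 (norm_nonneg _)
      (mul_nonneg (norm_nonneg _) (norm_nonneg _))
  have hle := mul_le_mul_of_nonneg_left hm (norm_nonneg c)
  have hfin : ‖w - r1‖ * ‖w - r2‖ * ‖w - r3‖
      ≤ ‖c‖ * (‖w - r1‖ * ‖w - r2‖ * ‖w - r3‖) := by
    exact habsid.le.trans hle
  nlinarith [mul_pos (mul_pos hp1 hp2) hp3]
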